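/- For all real A > 0 with A ≠ 1 and B > 0: (B² − A² − 1)³ > 27 A² B² if and only if B^{2/3} > A^{2/3} + 1, and (B² − A² − 1)³ = 27 A² B² if and only if B^{2/3} = A^{2/3} + 1 (here B^{2/3} = (B²)^{1/3} and A^{2/3} = (A²)^{1/3} with real cube roots). -/
import Mathlib


/-- The real cube root. -/
noncomputable def cbrt (x : ℝ) : ℝ :=
  if 0 ≤ x then x ^ ((1 : ℝ) / 3) else -((-x) ^ ((1 : ℝ) / 3))

lemma cbrt_pos_cube {x : ℝ} (hx : 0 < x) : 0 < cbrt x ∧ (cbrt x) ^ 3 = x := by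
  rw [cbrt, if_pos hx.le]
  constructor
  · exact Real.rpow_pos_of_pos hx _
  · rw [← Real.rpow_natCast (x ^ ((1:ℝ)/3)) 3, ← Real.rpow_mul hx.le]
    norm_num

lemma key_algebra (a b : ℝ) (ha : 0 < a) (hb : 0 < b) :
    ((b ^ 3 - a ^ 3 - 1) ^ 3 > 27 * a ^ 3 * b ^ 3 ↔ b > a + 1) ∧
    ((b ^ 3 - a ^ 3 - 1) ^ 3 = 27 * a ^ 3 * b ^ 3 ↔ b = a + 1) := by
  set u : ℝ := b ^ 3 - a ^ 3 - 1 with hu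
  have hQ : 0 < a ^ 2 + b ^ 2 + 1 + a * b - a + b := by nlinarith [sq_nonneg (a - 1), sq_nonneg (a + b)]
  have hP : 0 < u ^ 2 + 3 * (a * b) * u + 9 * a ^ 2 * b ^ 2 := by
    nlinarith [sq_nonneg (2 * u + 3 * a * b), mul_pos ha hb]
  have hQP : 0 < (a ^ 2 + b ^ 2 + 1 + a * b - a + b) *
      (u ^ 2 + 3 * (a * b) * u + 9 * a ^ 2 * b ^ 2) := mul_pos hQ hP
  have hfact : u ^ 3 - 27 * a ^ 3 * b ^ 3 =
      (b - a - 1) * ((a ^ 2 + b ^ 2 + 1 + a * b - a + b) *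
        (u ^ 2 + 3 * (a * b) * u + 9 * a ^ 2 * b ^ 2)) := by
    rw [hu]; ring
  constructor
  · constructor
    · intro h
      have h1 : 0 < (b - a - 1) * ((a ^ 2 + b ^ 2 + 1 + a * b - a + b) *
          (u ^ 2 + 3 * (a * b) * u + 9 * a ^ 2 * b ^ 2)) := by linarith [hfact]
      by_contra hc
      push_neg at hc
      nlinarith [mul_nonpos_of_nonpos_of_nonneg (show b - a - 1 ≤ 0 by linarith) hQP.le]
    · intro h
      have h1 : 0 < b - a - 1 := by linarith
      nlinarith [mul_pos h1 hQP]
  · constructor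
    · intro h
      have h1 : (b - a - 1) * ((a ^ 2 + b ^ 2 + 1 + a * b - a + b) *
          (u ^ 2 + 3 * (a * b) * u + 9 * a ^ 2 * b ^ 2)) = 0 := by linarith [hfact]
      rcases mul_eq_zero.mp h1 with h2 | h2
      · linarith
      · exact absurd h2 hQP.ne'
    · intro h
      have : u ^ 3 - 27 * a ^ 3 * b ^ 3 = 0 := by rw [hfact, h]; ring
      linarith

theorem discriminant_condition_equivalence (A B : ℝ)
    (hA : 0 < A) (hA1 : A ≠ 1) (hB : 0 < B) :
    ((B ^ 2 - A ^ 2 - 1) ^ 3 > 27 * A ^ 2 * B ^ 2 ↔ cbrt (B ^ 2) > cbrt (A ^ 2) + 1) ∧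
    ((B ^ 2 - A ^ 2 - 1) ^ 3 = 27 * A ^ 2 * B ^ 2 ↔ cbrt (B ^ 2) = cbrt (A ^ 2) + 1) := by
  obtain ⟨ha, ha3⟩ := cbrt_pos_cube (show (0:ℝ) < A ^ 2 by positivity)
  obtain ⟨hb, hb3⟩ := cbrt_pos_cube (show (0:ℝ) < B ^ 2 by positivity)
  have := key_algebra (cbrt (A ^ 2)) (cbrt (B ^ 2)) ha hb
  rw [ha3, hb3] at this
  exact this
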